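/- Let Ω be a nonempty finite type with probability weights p : Ω → ℝ (p ω > 0 for all ω, ∑_ω p ω = 1), ξ : Ω → (ι → ℝ), and let Θ̃ be concave on a convex set S ⊆ (ι → ℝ) containing the range of ξ. If a partition 𝒫' of Ω refines a partition 𝒫, then the partition upper bounds satisfy ∑_{C ∈ 𝒫'.parts} P(C) · Θ̃(μ_C) ≤ ∑_{C ∈ 𝒫.parts} P(C) · Θ̃(μ_C). -/
import Mathlib


/-- Corollary 3 of the paper: refining a partition yields a (penalized)
mean-value upper bound that is at least as tight. `Pt' ≤ Pt` is the refinement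
order on `Finpartition`. -/
theorem refinement_tightens_upper_bound
    {Ω ι : Type*} [Fintype Ω] [DecidableEq Ω] [Nonempty Ω] [Fintype ι]
    (p : Ω → ℝ) (hp : ∀ ω, 0 < p ω) (hsum : ∑ ω, p ω = 1)
    (ξ : Ω → ι → ℝ) (S : Set (ι → ℝ)) (hS : Convex ℝ S)
    (hξS : ∀ ω, ξ ω ∈ S)
    (Θt : (ι → ℝ) → ℝ) (hΘt : ConcaveOn ℝ S Θt)
    (Pt Pt' : Finpartition (Finset.univ : Finset Ω)) (href : Pt' ≤ Pt) :
    ∑ C ∈ Pt'.parts,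
        (∑ ω ∈ C, p ω) * Θt ((∑ ω ∈ C, p ω)⁻¹ • ∑ ω ∈ C, p ω • ξ ω) ≤
      ∑ C ∈ Pt.parts,
        (∑ ω ∈ C, p ω) * Θt ((∑ ω ∈ C, p ω)⁻¹ • ∑ ω ∈ C, p ω • ξ ω) := by
  classical
  set W : Finset Ω → ℝ := fun C => ∑ ω ∈ C, p ω with hW
  set μ : Finset Ω → (ι → ℝ) := fun C => (W C)⁻¹ • ∑ ω ∈ C, p ω • ξ ω with hμ
  have hWpos : ∀ C : Finset Ω, C.Nonempty → 0 < W C := fun C hC =>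
    Finset.sum_pos (fun ω _ => hp ω) hC
  -- choice of containing part
  have hchoice : ∀ C ∈ Pt'.parts, ∃ D ∈ Pt.parts, C ⊆ D := fun C hC => href hC
  set f : Finset Ω → Finset Ω := fun C =>
    if h : C ∈ Pt'.parts then (hchoice C h).choose else ∅ with hf
  have hfmem : ∀ C ∈ Pt'.parts, f C ∈ Pt.parts := by
    intro C hC; simp only [hf, dif_pos hC]; exact (hchoice C hC).choose_spec.1
  have hfsub : ∀ C ∈ Pt'.parts, C ⊆ f C := by
    intro C hC; simp only [hf, dif_pos hC]; exact (hchoice C hC).choose_spec.2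
  rw [← Finset.sum_fiberwise_of_maps_to hfmem
    (fun C => W C * Θt (μ C))]
  refine Finset.sum_le_sum fun D hD => ?_
  set T : Finset (Finset Ω) := Pt'.parts.filter (fun C => f C = D) with hT
  -- D is the disjoint union of the parts in T
  have hDbiUnion : D = T.biUnion id := by
    apply Finset.Subset.antisymm
    · intro ω hω
      obtain ⟨C, hC, hωC⟩ := Pt'.exists_mem (Finset.mem_univ ω)
      have h1 : ω ∈ f C := hfsub C hC hωC
      have heq : f C = D := Pt.eq_of_mem_parts (hfmem C hC) hD h1 hω
      exact Finset.mem_biUnion.2 ⟨C, Finset.mem_filter.2 ⟨hC, heq⟩, hωC⟩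
    · intro ω hω
      obtain ⟨C, hC, hωC⟩ := Finset.mem_biUnion.1 hω
      have hC' := Finset.mem_filter.1 hC
      exact hC'.2 ▸ hfsub C hC'.1 hωC
  have hdisj : Set.PairwiseDisjoint (T : Set (Finset Ω)) id :=
    Pt'.disjoint.subset (by intro x hx; exact (Finset.mem_filter.1 hx).1)
  have hne : ∀ C ∈ T, C.Nonempty := fun C hC =>
    Pt'.nonempty_of_mem_parts (Finset.mem_filter.1 hC).1
  have hWsum : ∑ C ∈ T, W C = W D := by
    show ∑ C ∈ T, ∑ ω ∈ C, p ω = ∑ ω ∈ D, p ω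
    rw [hDbiUnion]
    exact (Finset.sum_biUnion hdisj).symm
  have hvsum : ∑ C ∈ T, ∑ ω ∈ C, p ω • ξ ω = ∑ ω ∈ D, p ω • ξ ω := by
    conv_rhs => rw [hDbiUnion]
    exact (Finset.sum_biUnion hdisj).symm
  have hDpos : 0 < W D := hWpos D (Pt.nonempty_of_mem_parts hD)
  -- μ C ∈ S
  have hμS : ∀ C ∈ T, μ C ∈ S := by
    intro C hC
    have := hS.centerMass_mem (t := C) (w := p) (z := ξ)
      (fun ω _ => (hp ω).le) (hWpos C (hne C hC)) (fun ω _ => hξS ω)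
    simpa [Finset.centerMass, hμ, hW] using this
  -- μ D is the center of mass of the μ C's
  have hμD : μ D = T.centerMass W μ := by
    rw [Finset.centerMass, hWsum]
    have key : ∀ C ∈ T, W C • μ C = ∑ ω ∈ C, p ω • ξ ω := fun C hC =>
      smul_inv_smul₀ (hWpos C (hne C hC)).ne' _
    rw [Finset.sum_congr rfl key, hvsum]
  calc ∑ C ∈ T, W C * Θt (μ C)
      = W D * T.centerMass W (Θt ∘ μ) := by
        rw [Finset.centerMass, hWsum]
        simp only [smul_eq_mul, Function.comp]
        rw [← mul_assoc, mul_inv_cancel₀ hDpos.ne', one_mul]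
    _ ≤ W D * Θt (μ D) := by
        rw [hμD]
        exact mul_le_mul_of_nonneg_left
          (hΘt.le_map_centerMass (fun C hC => (hWpos C (hne C hC)).le)
            (hWsum ▸ hDpos) hμS) hDpos.le
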